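/- Let g : ℝ → ℝ ∪ {+∞} be proper, lower semicontinuous and bounded below, and L > 0. Then the set-valued map G has closed graph (hence is outer semicontinuous): if u_n ∈ G(q_n) for all n, u_n → u and q_n → q in ℝ, then u ∈ G(q). The same holds for G⁰; moreover, if u₀ > 0 and q₀ > 0 are constants such that every element of prox_{L⁻¹g}(q) is 0 or of modulus at least u₀ (for all q), then G⁺ and G⁻ also have closed graphs. -/

import Mathlib

/-- `u ∈ prox_{s·g}(q)`: `u` is a global minimizer of `v ↦ ½(v − q)² + s·g(v)`,
where `g : ℝ → ℝ ∪ {+∞}` is modeled as an `EReal`-valued function. -/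
def IsProx (g : ℝ → EReal) (s q u : ℝ) : Prop :=
  ∀ v : ℝ, (((u - q) ^ 2 / 2 : ℝ) : EReal) + (s : EReal) * g u ≤
    (((v - q) ^ 2 / 2 : ℝ) : EReal) + (s : EReal) * g v

/-- `u ∈ G(z)` for the set-valued map `G = G_L`: `u` is a global minimizer of
`v ↦ −z·v + (L/2)(v − u)² + g(v)`. -/
def InG (g : ℝ → EReal) (L z u : ℝ) : Prop :=
  ∀ v : ℝ, ((-z * u : ℝ) : EReal) + g u ≤ ((-z * v + L / 2 * (v - u) ^ 2 : ℝ) : EReal) + g v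

lemma InG.gu_ne_top {g : ℝ → EReal} {L z u : ℝ} (x₀ : ℝ) (hx₀ : g x₀ ≠ ⊤)
    (h : InG g L z u) : g u ≠ ⊤ := by
  intro htop
  have := h x₀
  rw [htop, EReal.add_top_of_ne_bot (EReal.coe_ne_bot _), top_le_iff] at this
  exact absurd this (EReal.add_lt_top (EReal.coe_ne_top _) hx₀).ne

/-- real-valued consequence of `InG` -/
lemma InG.real_ineq {g : ℝ → EReal} {L z u v : ℝ} (h : InG g L z u)
    {a b : ℝ} (ha : g u = (a : EReal)) (hb : g v = (b : EReal)) :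
    -z * u + a ≤ -z * v + L / 2 * (v - u) ^ 2 + b := by
  have := h v
  rw [ha, hb, ← EReal.coe_add, ← EReal.coe_add, EReal.coe_le_coe_iff] at this
  exact this

/-- `InG` implies membership in the prox at `u + z / L`. -/
lemma InG.isProx {g : ℝ → EReal} {c : ℝ} (hgbdd : ∀ x : ℝ, (c : EReal) ≤ g x)
    (x₀ : ℝ) (hx₀ : g x₀ ≠ ⊤) {L z u : ℝ} (hL : 0 < L) (h : InG g L z u) :
    IsProx g L⁻¹ (u + z / L) u := by
  have hnb : ∀ x : ℝ, g x ≠ ⊥ := fun x hx => by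
    have := hgbdd x; rw [hx, le_bot_iff] at this; exact EReal.coe_ne_bot _ this
  have hnt := h.gu_ne_top x₀ hx₀
  set a := (g u).toReal with ha
  have hga : g u = (a : EReal) := (EReal.coe_toReal hnt (hnb u)).symm
  intro v
  rcases eq_or_ne (g v) ⊤ with hv | hv
  · rw [hv, EReal.coe_mul_top_of_pos (by positivity), EReal.add_top_of_ne_bot (EReal.coe_ne_bot _)]
    exact le_top
  · set b := (g v).toReal with hb
    have hgb : g v = (b : EReal) := (EReal.coe_toReal hv (hnb v)).symm
    have hre := h.real_ineq hga hgb
    rw [hga, hgb, ← EReal.coe_mul, ← EReal.coe_mul, ← EReal.coe_add, ← EReal.coe_add,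
      EReal.coe_le_coe_iff]
    have hL' : L ≠ 0 := ne_of_gt hL
    have key : L⁻¹ * a - L⁻¹ * b ≤ (v - (u + z / L)) ^ 2 / 2 - (u - (u + z / L)) ^ 2 / 2 := by
      have h1 : a - b ≤ L / 2 * (v - u) ^ 2 - z * (v - u) := by linarith
      have h2 : (v - (u + z / L)) ^ 2 / 2 - (u - (u + z / L)) ^ 2 / 2
          = (v - u) ^ 2 / 2 - (v - u) * (z / L) := by field_simp; ring
      rw [h2]
      have h3 : L⁻¹ * (a - b) ≤ L⁻¹ * (L / 2 * (v - u) ^ 2 - z * (v - u)) :=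
        mul_le_mul_of_nonneg_left h1 (inv_nonneg.2 hL.le)
      have h4 : L⁻¹ * (L / 2 * (v - u) ^ 2 - z * (v - u))
          = (v - u) ^ 2 / 2 - (v - u) * (z / L) := by field_simp
      linarith
    linarith
  
/-- the graph of `G` is closed -/
lemma inG_closed (g : ℝ → EReal) (x₀ : ℝ) (hx₀ : g x₀ ≠ ⊤) {c : ℝ}
    (hgbdd : ∀ x : ℝ, (c : EReal) ≤ g x) (hglsc : LowerSemicontinuous g) (L : ℝ) :
    IsClosed {p : ℝ × ℝ | InG g L p.1 p.2} := by
  have hnb : ∀ x : ℝ, g x ≠ ⊥ := fun x hx => by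
    have := hgbdd x; rw [hx, le_bot_iff] at this; exact EReal.coe_ne_bot _ this
  apply IsSeqClosed.isClosed
  intro p q hmem htend
  set z := q.1
  set u := q.2
  intro v
  rcases eq_or_ne (g v) ⊤ with hv | hv
  · rw [hv, EReal.add_top_of_ne_bot (EReal.coe_ne_bot _)]; exact le_top
  set b := (g v).toReal with hb
  have hgb : g v = (b : EReal) := (EReal.coe_toReal hv (hnb v)).symm
  -- limits of coordinates
  have hz : Filter.Tendsto (fun n => (p n).1) Filter.atTop (nhds z) :=
    (continuous_fst.tendsto q).comp htend
  have hu : Filter.Tendsto (fun n => (p n).2) Filter.atTop (nhds u) :=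
    (continuous_snd.tendsto q).comp htend
  -- it suffices to show g u ≤ R + z*u  where R is the target RHS real part + b
  set R : ℝ := -z * v + L / 2 * (v - u) ^ 2 + b with hR
  have main : g u ≤ ((R + z * u : ℝ) : EReal) := by
    by_contra hcon
    push_neg at hcon
    obtain ⟨y, hy1, hy2⟩ := EReal.exists_between_coe_real hcon
    -- eventually y < g (p n).2 by lsc
    have hev1 : ∀ᶠ n in Filter.atTop, (y : EReal) < g (p n).2 :=
      hu.eventually (hglsc u y hy2)
    -- eventually the real upper bound for g (p n).2 is below y
    have hlim : Filter.Tendsto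
        (fun n => -(p n).1 * v + L / 2 * (v - (p n).2) ^ 2 + b + (p n).1 * (p n).2)
        Filter.atTop (nhds (R + z * u)) := by
      have : Continuous fun q : ℝ × ℝ =>
          -q.1 * v + L / 2 * (v - q.2) ^ 2 + b + q.1 * q.2 :=
        (((continuous_fst.neg.mul continuous_const).add
          (continuous_const.mul ((continuous_const.sub continuous_snd).pow 2))).add
          continuous_const).add (continuous_fst.mul continuous_snd)
      exact (this.tendsto q).comp htend
    have hRy : R + z * u < y := by exact_mod_cast hy1
    have hev2 : ∀ᶠ n in Filter.atTop,
        -(p n).1 * v + L / 2 * (v - (p n).2) ^ 2 + b + (p n).1 * (p n).2 < y :=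
      hlim.eventually_lt_const hRy
    obtain ⟨n, h1, h2⟩ := (hev1.and hev2).exists
    -- g (p n).2 is finite
    have hnt : g (p n).2 ≠ ⊤ := (hmem n).gu_ne_top x₀ hx₀
    set an := (g (p n).2).toReal with han
    have hgan : g (p n).2 = (an : EReal) := (EReal.coe_toReal hnt (hnb _)).symm
    have hre := (hmem n).real_ineq hgan hgb
    rw [hgan, EReal.coe_lt_coe_iff] at h1
    linarith
  calc ((-z * u : ℝ) : EReal) + g u ≤ ((-z * u : ℝ) : EReal) + ((R + z * u : ℝ) : EReal) :=
        add_le_add le_rfl main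
    _ = ((R : ℝ) : EReal) := by rw [← EReal.coe_add]; congr 1; ring
    _ = ((-z * v + L / 2 * (v - u) ^ 2 : ℝ) : EReal) + g v := by
        rw [hgb, ← EReal.coe_add, hR]

theorem G_closed_graphs (g : ℝ → EReal)
    (hgproper : ∃ x : ℝ, g x ≠ ⊤)
    (hgbdd : ∃ c : ℝ, ∀ x : ℝ, (c : EReal) ≤ g x)
    (hglsc : LowerSemicontinuous g)
    (L : ℝ) (hL : 0 < L) :
    IsClosed {p : ℝ × ℝ | InG g L p.1 p.2}
    ∧ IsClosed {p : ℝ × ℝ | InG g L p.1 p.2 ∧ p.2 = 0}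
    ∧ (∀ u₀ q₀ : ℝ, 0 < u₀ → 0 < q₀ →
        (∀ q u : ℝ, IsProx g L⁻¹ q u → u = 0 ∨ u₀ ≤ |u|) →
        IsClosed {p : ℝ × ℝ | InG g L p.1 p.2 ∧ 0 < p.2}
        ∧ IsClosed {p : ℝ × ℝ | InG g L p.1 p.2 ∧ p.2 < 0}) := by
  obtain ⟨x₀, hx₀⟩ := hgproper
  obtain ⟨c, hc⟩ := hgbdd
  have hG := inG_closed g x₀ hx₀ hc hglsc L
  refine ⟨hG, ?_, ?_⟩
  · exact hG.inter (isClosed_eq continuous_snd continuous_const)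
  · intro u₀ q₀ hu₀ hq₀ hprox
    constructor
    · have : {p : ℝ × ℝ | InG g L p.1 p.2 ∧ 0 < p.2}
          = {p : ℝ × ℝ | InG g L p.1 p.2} ∩ {p : ℝ × ℝ | u₀ ≤ p.2} := by
        ext p
        simp only [Set.mem_setOf_eq, Set.mem_inter_iff]
        constructor
        · rintro ⟨h1, h2⟩
          refine ⟨h1, ?_⟩
          rcases hprox _ _ (h1.isProx hc x₀ hx₀ hL) with h | h
          · exact absurd h (ne_of_gt h2)
          · rwa [abs_of_pos h2] at h
        · rintro ⟨h1, h2⟩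
          exact ⟨h1, lt_of_lt_of_le hu₀ h2⟩
      rw [this]
      exact hG.inter (isClosed_le continuous_const continuous_snd)
    · have : {p : ℝ × ℝ | InG g L p.1 p.2 ∧ p.2 < 0}
          = {p : ℝ × ℝ | InG g L p.1 p.2} ∩ {p : ℝ × ℝ | p.2 ≤ -u₀} := by
        ext p
        simp only [Set.mem_setOf_eq, Set.mem_inter_iff]
        constructor
        · rintro ⟨h1, h2⟩
          refine ⟨h1, ?_⟩
          rcases hprox _ _ (h1.isProx hc x₀ hx₀ hL) with h | h
          · exact absurd h (ne_of_lt h2)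
          · rw [abs_of_neg h2] at h; linarith
        · rintro ⟨h1, h2⟩
          exact ⟨h1, lt_of_le_of_lt h2 (by linarith)⟩
      rw [this]
      exact hG.inter (isClosed_le continuous_snd continuous_const)
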